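/- Let a ∈ (0, 1], θ ∈ (0, 2], C₀ > 0 and let μ be a finite Borel measure on (0, ∞) with μ((0, a)) = 0 and μ([t, ∞)) ≤ C₀ t^{−θ} for all t ≥ a. Let ρ ∈ (0, 1] satisfy ρ ≤ θ, and additionally ρ < 1 in case θ = 1. Then there exists C > 0 such that for all u ∈ ℝ: ∫_{(0,∞)} |τ(u x)| μ(dx) ≤ C ( |u|^ρ · 1_{|u|≤1} + 1_{|u|>1} ). -/

import Mathlib

open MeasureTheory Set
open scoped ENNReal

noncomputable section

/-- The truncation function `τ(x) = x·1_{|x|<1} + sign(x)·1_{|x|≥1}`. -/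
def tauTrunc (x : ℝ) : ℝ := if |x| < 1 then x else Real.sign x

lemma tauTrunc_abs_le_one (y : ℝ) : |tauTrunc y| ≤ 1 := by
  unfold tauTrunc
  split_ifs with h
  · exact h.le
  · rcases Real.sign_apply_eq y with h1 | h1 | h1 <;> rw [h1] <;> norm_num

lemma tauTrunc_abs_le_abs (y : ℝ) : |tauTrunc y| ≤ |y| := by
  unfold tauTrunc
  split_ifs with h
  · exact le_rfl
  · push_neg at h
    refine le_trans ?_ h
    rcases Real.sign_apply_eq y with h1 | h1 | h1 <;> rw [h1] <;> norm_num

lemma measurable_tauTrunc : Measurable tauTrunc := by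
  have hs : Measurable Real.sign := by
    unfold Real.sign
    exact Measurable.ite (measurableSet_lt measurable_id measurable_const) measurable_const
      (Measurable.ite (measurableSet_lt measurable_const measurable_id) measurable_const
        measurable_const)
  unfold tauTrunc
  exact Measurable.ite (measurableSet_lt measurable_abs measurable_const) measurable_id hs

lemma key_reduction (a θ C₀ : ℝ) (ha0 : 0 < a)
    (μ : Measure ℝ) (hsmall : μ (Set.Ioo 0 a) = 0)
    (htail : ∀ t : ℝ, a ≤ t → μ (Set.Ici t) ≤ ENNReal.ofReal (C₀ * t ^ (-θ)))
    (u : ℝ) (hu0 : 0 < |u|) :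
    ∫⁻ x in Set.Ioi (0 : ℝ), ENNReal.ofReal |tauTrunc (u * x)| ∂μ ≤
      ∫⁻ t in Set.Ioc (0 : ℝ) 1, ENNReal.ofReal (C₀ * (max a (t / |u|)) ^ (-θ)) := by
  have hf_meas : Measurable (fun x => |tauTrunc (u * x)|) :=
    (measurable_tauTrunc.comp (measurable_const_mul u)).abs
  rw [lintegral_eq_lintegral_meas_le (μ.restrict (Ioi 0))
    (Filter.Eventually.of_forall fun x => abs_nonneg _) hf_meas.aemeasurable]
  have step2 : ∫⁻ t in Ioi (0:ℝ),
      (Ioc (0:ℝ) 1).indicator (fun t => ENNReal.ofReal (C₀ * (max a (t / |u|)) ^ (-θ))) t =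
      ∫⁻ t in Set.Ioc (0 : ℝ) 1, ENNReal.ofReal (C₀ * (max a (t / |u|)) ^ (-θ)) := by
    rw [lintegral_indicator measurableSet_Ioc, Measure.restrict_restrict measurableSet_Ioc,
      inter_eq_left.mpr (fun t ht => ht.1)]
  rw [← step2]
  refine setLIntegral_mono' measurableSet_Ioi (fun t ht => ?_)
  rcases le_or_gt t 1 with ht1 | ht1
  swap
  · have hempty : {x : ℝ | t ≤ |tauTrunc (u * x)|} = ∅ := by
      ext x
      simp only [mem_setOf_eq, mem_empty_iff_false, iff_false, not_le]
      exact lt_of_le_of_lt (tauTrunc_abs_le_one _) ht1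
    rw [hempty, measure_empty]
    exact zero_le
  have hmem : t ∈ Ioc (0:ℝ) 1 := ⟨ht, ht1⟩
  rw [Set.indicator_of_mem hmem]
  have hset : MeasurableSet {x : ℝ | t ≤ |tauTrunc (u * x)|} := hf_meas measurableSet_Ici
  rw [Measure.restrict_apply hset]
  have hsub : {x : ℝ | t ≤ |tauTrunc (u * x)|} ∩ Ioi 0 ⊆
      Ioo 0 a ∪ Ici (max a (t / |u|)) := by
    rintro x ⟨hx1, hx2⟩
    rcases lt_or_ge x a with hxa | hxa
    · exact Or.inl ⟨hx2, hxa⟩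
    · refine Or.inr (max_le hxa ?_)
      have hx3 : t ≤ |u| * x := by
        calc t ≤ |tauTrunc (u * x)| := hx1
          _ ≤ |u * x| := tauTrunc_abs_le_abs _
          _ = |u| * x := by rw [abs_mul, abs_of_pos (mem_Ioi.mp hx2)]
      rw [div_le_iff₀ hu0]
      linarith [hx3]
  calc μ ({x : ℝ | t ≤ |tauTrunc (u * x)|} ∩ Ioi 0)
      ≤ μ (Ioo 0 a ∪ Ici (max a (t / |u|))) := measure_mono hsub
    _ ≤ μ (Ioo 0 a) + μ (Ici (max a (t / |u|))) := measure_union_le _ _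
    _ ≤ ENNReal.ofReal (C₀ * (max a (t / |u|)) ^ (-θ)) := by
        rw [hsmall, zero_add]
        exact htail _ (le_max_left _ _)

lemma boundA (a θ C₀ ρ : ℝ) (ha0 : 0 < a) (hθ0 : 0 < θ) (hC₀ : 0 < C₀)
    (hρ0 : 0 < ρ) (hρ1 : ρ < 1) (hρθ : ρ ≤ θ)
    (u : ℝ) (hu0 : 0 < |u|) :
    ∫⁻ t in Set.Ioc (0 : ℝ) 1, ENNReal.ofReal (C₀ * (max a (t / |u|)) ^ (-θ)) ≤
      ENNReal.ofReal ((C₀ * a ^ (ρ - θ) / (1 - ρ)) * |u| ^ ρ) := by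
  have hK : 0 ≤ C₀ * a ^ (ρ - θ) * |u| ^ ρ := by positivity
  have step1 : ∫⁻ t in Set.Ioc (0 : ℝ) 1, ENNReal.ofReal (C₀ * (max a (t / |u|)) ^ (-θ)) ≤
      ∫⁻ t in Set.Ioc (0 : ℝ) 1, ENNReal.ofReal ((C₀ * a ^ (ρ - θ) * |u| ^ ρ) * t ^ (-ρ)) := by
    refine setLIntegral_mono' measurableSet_Ioc (fun t ht => ?_)
    refine ENNReal.ofReal_le_ofReal ?_
    set M := max a (t / |u|) with hM
    have hM0 : 0 < M := lt_of_lt_of_le ha0 (le_max_left _ _)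
    have htu : 0 < t / |u| := div_pos ht.1 hu0
    have e1 : M ^ (-θ) = M ^ (ρ - θ) * M ^ (-ρ) := by
      rw [← Real.rpow_add hM0]; ring_nf
    have e2 : M ^ (ρ - θ) ≤ a ^ (ρ - θ) :=
      Real.rpow_le_rpow_of_nonpos ha0 (le_max_left _ _) (by linarith)
    have e3 : M ^ (-ρ) ≤ (t / |u|) ^ (-ρ) :=
      Real.rpow_le_rpow_of_nonpos htu (le_max_right _ _) (by linarith)
    have e4 : (t / |u|) ^ (-ρ) = t ^ (-ρ) * |u| ^ ρ := by
      rw [Real.div_rpow ht.1.le (abs_nonneg u), Real.rpow_neg (abs_nonneg u)]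
      field_simp
    calc C₀ * M ^ (-θ) = C₀ * (M ^ (ρ - θ) * M ^ (-ρ)) := by rw [e1]
      _ ≤ C₀ * (a ^ (ρ - θ) * (t ^ (-ρ) * |u| ^ ρ)) := by
          rw [← e4]
          refine mul_le_mul_of_nonneg_left ?_ hC₀.le
          exact mul_le_mul e2 e3 (Real.rpow_nonneg hM0.le _) (Real.rpow_nonneg ha0.le _)
      _ = (C₀ * a ^ (ρ - θ) * |u| ^ ρ) * t ^ (-ρ) := by ring
  refine le_trans step1 (le_of_eq ?_)
  have hint : IntegrableOn (fun t : ℝ => t ^ (-ρ)) (Set.Ioc 0 1) := by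
    have := intervalIntegral.intervalIntegrable_rpow' (a := (0:ℝ)) (b := 1)
      (by linarith : (-1:ℝ) < -ρ)
    exact (intervalIntegrable_iff_integrableOn_Ioc_of_le zero_le_one).mp this
  have hnn : 0 ≤ᵐ[volume.restrict (Set.Ioc (0:ℝ) 1)] fun t : ℝ => t ^ (-ρ) :=
    (ae_restrict_iff' measurableSet_Ioc).mpr
      (Filter.Eventually.of_forall fun t ht => Real.rpow_nonneg ht.1.le _)
  have hval : ∫ t in Set.Ioc (0:ℝ) 1, t ^ (-ρ) = 1 / (1 - ρ) := by
    rw [← intervalIntegral.integral_of_le zero_le_one,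
      integral_rpow (Or.inl (by linarith : (-1:ℝ) < -ρ))]
    rw [Real.one_rpow, Real.zero_rpow (by linarith : -ρ + 1 ≠ 0)]
    ring_nf
  calc ∫⁻ t in Set.Ioc (0 : ℝ) 1, ENNReal.ofReal ((C₀ * a ^ (ρ - θ) * |u| ^ ρ) * t ^ (-ρ))
      = ENNReal.ofReal (C₀ * a ^ (ρ - θ) * |u| ^ ρ) *
        ∫⁻ t in Set.Ioc (0 : ℝ) 1, ENNReal.ofReal (t ^ (-ρ)) := by
        simp_rw [ENNReal.ofReal_mul hK]
        rw [lintegral_const_mul' _ _ ENNReal.ofReal_ne_top]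
    _ = ENNReal.ofReal (C₀ * a ^ (ρ - θ) * |u| ^ ρ) * ENNReal.ofReal (1 / (1 - ρ)) := by
        rw [← ofReal_integral_eq_lintegral_ofReal hint hnn, hval]
    _ = ENNReal.ofReal ((C₀ * a ^ (ρ - θ) / (1 - ρ)) * |u| ^ ρ) := by
        rw [← ENNReal.ofReal_mul hK]
        congr 1
        ring

lemma boundB (a θ C₀ : ℝ) (ha0 : 0 < a) (ha1 : a ≤ 1) (hθ1 : 1 < θ) (hC₀ : 0 < C₀)
    (u : ℝ) (hu0 : 0 < |u|) (hu1 : |u| ≤ 1) :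
    ∫⁻ t in Set.Ioc (0 : ℝ) 1, ENNReal.ofReal (C₀ * (max a (t / |u|)) ^ (-θ)) ≤
      ENNReal.ofReal ((C₀ * a ^ (1 - θ) * (1 + 1 / (θ - 1))) * |u|) := by
  set c := a * |u| with hc
  have hc0 : 0 < c := mul_pos ha0 hu0
  have hc1 : c ≤ 1 := mul_le_one₀ ha1 hu0.le hu1
  rw [← Ioc_union_Ioc_eq_Ioc hc0.le hc1,
    lintegral_union measurableSet_Ioc (Set.Ioc_disjoint_Ioc_of_le le_rfl)]
  have piece1 : ∫⁻ t in Set.Ioc (0 : ℝ) c, ENNReal.ofReal (C₀ * (max a (t / |u|)) ^ (-θ)) ≤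
      ENNReal.ofReal (C₀ * a ^ (1 - θ) * |u|) := by
    have hb : ∀ t ∈ Set.Ioc (0:ℝ) c, ENNReal.ofReal (C₀ * (max a (t / |u|)) ^ (-θ)) ≤
        ENNReal.ofReal (C₀ * a ^ (-θ)) := by
      intro t ht
      refine ENNReal.ofReal_le_ofReal (mul_le_mul_of_nonneg_left ?_ hC₀.le)
      exact Real.rpow_le_rpow_of_nonpos ha0 (le_max_left _ _) (by linarith)
    calc ∫⁻ t in Set.Ioc (0 : ℝ) c, ENNReal.ofReal (C₀ * (max a (t / |u|)) ^ (-θ))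
        ≤ ∫⁻ _ in Set.Ioc (0 : ℝ) c, ENNReal.ofReal (C₀ * a ^ (-θ)) :=
          setLIntegral_mono' measurableSet_Ioc hb
      _ = ENNReal.ofReal (C₀ * a ^ (-θ)) * ENNReal.ofReal c := by
          rw [setLIntegral_const, Real.volume_Ioc, sub_zero]
      _ = ENNReal.ofReal (C₀ * a ^ (-θ) * c) := by
          rw [← ENNReal.ofReal_mul (by positivity)]
      _ = ENNReal.ofReal (C₀ * a ^ (1 - θ) * |u|) := by
          congr 1
          rw [hc]
          have : a ^ (1 - θ) = a * a ^ (-θ) := by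
            nth_rewrite 2 [← Real.rpow_one a]
            rw [← Real.rpow_add ha0]; ring_nf
          rw [this]; ring
  have piece2 : ∫⁻ t in Set.Ioc c 1, ENNReal.ofReal (C₀ * (max a (t / |u|)) ^ (-θ)) ≤
      ENNReal.ofReal ((C₀ * a ^ (1 - θ) / (θ - 1)) * |u|) := by
    have step1 : ∫⁻ t in Set.Ioc c 1, ENNReal.ofReal (C₀ * (max a (t / |u|)) ^ (-θ)) ≤
        ∫⁻ t in Set.Ioc c 1, ENNReal.ofReal ((C₀ * |u| ^ θ) * t ^ (-θ)) := by
      refine setLIntegral_mono' measurableSet_Ioc (fun t ht => ?_)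
      refine ENNReal.ofReal_le_ofReal ?_
      have ht0 : 0 < t := lt_trans hc0 ht.1
      have htu : 0 < t / |u| := div_pos ht0 hu0
      have e3 : (max a (t / |u|)) ^ (-θ) ≤ (t / |u|) ^ (-θ) :=
        Real.rpow_le_rpow_of_nonpos htu (le_max_right _ _) (by linarith)
      have e4 : (t / |u|) ^ (-θ) = t ^ (-θ) * |u| ^ θ := by
        rw [Real.div_rpow ht0.le (abs_nonneg u), Real.rpow_neg (abs_nonneg u)]
        field_simp
      calc C₀ * (max a (t / |u|)) ^ (-θ) ≤ C₀ * (t ^ (-θ) * |u| ^ θ) := by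
            rw [← e4]; exact mul_le_mul_of_nonneg_left e3 hC₀.le
        _ = (C₀ * |u| ^ θ) * t ^ (-θ) := by ring
    refine le_trans step1 ?_
    have hint : IntegrableOn (fun t : ℝ => t ^ (-θ)) (Set.Ioc c 1) := by
      have hco : ContinuousOn (fun t : ℝ => t ^ (-θ)) (Set.Icc c 1) := fun t ht =>
        (Real.continuousAt_rpow_const t (-θ)
          (Or.inl (ne_of_gt (lt_of_lt_of_le hc0 ht.1)))).continuousWithinAt
      exact (hco.integrableOn_Icc).mono_set Set.Ioc_subset_Icc_self
    have hnn : 0 ≤ᵐ[volume.restrict (Set.Ioc c 1)] fun t : ℝ => t ^ (-θ) :=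
      (ae_restrict_iff' measurableSet_Ioc).mpr
        (Filter.Eventually.of_forall fun t ht =>
          Real.rpow_nonneg (le_of_lt (lt_trans hc0 ht.1)) _)
    have hne : (-θ) ≠ -1 := fun h => absurd (neg_inj.mp h) (by intro h2; linarith)
    have h0m : (0:ℝ) ∉ Set.uIcc c 1 := by
      rw [Set.uIcc_of_le hc1]
      exact fun h => absurd h.1 (not_le.mpr hc0)
    have hval : ∫ t in Set.Ioc c 1, t ^ (-θ) = (c ^ (1 - θ) - 1) / (θ - 1) := by
      rw [← intervalIntegral.integral_of_le hc1, integral_rpow (Or.inr ⟨hne, h0m⟩)]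
      rw [show -θ + 1 = 1 - θ by ring, Real.one_rpow]
      rw [div_eq_div_iff (by intro h; rw [sub_eq_zero] at h; linarith : (1:ℝ) - θ ≠ 0)
        (by intro h; rw [sub_eq_zero] at h; linarith : θ - 1 ≠ 0)]
      ring
    calc ∫⁻ t in Set.Ioc c 1, ENNReal.ofReal ((C₀ * |u| ^ θ) * t ^ (-θ))
        = ENNReal.ofReal (C₀ * |u| ^ θ) *
          ∫⁻ t in Set.Ioc c 1, ENNReal.ofReal (t ^ (-θ)) := by
          simp_rw [ENNReal.ofReal_mul (by positivity : (0:ℝ) ≤ C₀ * |u| ^ θ)]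
          rw [lintegral_const_mul' _ _ ENNReal.ofReal_ne_top]
      _ = ENNReal.ofReal (C₀ * |u| ^ θ) * ENNReal.ofReal ((c ^ (1 - θ) - 1) / (θ - 1)) := by
          rw [← ofReal_integral_eq_lintegral_ofReal hint hnn, hval]
      _ ≤ ENNReal.ofReal (C₀ * |u| ^ θ) * ENNReal.ofReal (c ^ (1 - θ) / (θ - 1)) := by
          refine mul_le_mul_right (ENNReal.ofReal_le_ofReal ?_) _
          gcongr
          · linarith
      _ = ENNReal.ofReal ((C₀ * a ^ (1 - θ) / (θ - 1)) * |u|) := by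
          rw [← ENNReal.ofReal_mul (by positivity)]
          congr 1
          have e5 : c ^ (1 - θ) = a ^ (1 - θ) * |u| ^ (1 - θ) :=
            Real.mul_rpow ha0.le (abs_nonneg u)
          have e6 : |u| ^ θ * |u| ^ (1 - θ) = |u| := by
            rw [← Real.rpow_add hu0]; norm_num
          calc C₀ * |u| ^ θ * (c ^ (1 - θ) / (θ - 1))
              = C₀ * a ^ (1 - θ) / (θ - 1) * (|u| ^ θ * |u| ^ (1 - θ)) := by
                rw [e5]; ring
            _ = C₀ * a ^ (1 - θ) / (θ - 1) * |u| := by rw [e6]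
  calc _ ≤ ENNReal.ofReal (C₀ * a ^ (1 - θ) * |u|) +
        ENNReal.ofReal ((C₀ * a ^ (1 - θ) / (θ - 1)) * |u|) := add_le_add piece1 piece2
    _ = ENNReal.ofReal ((C₀ * a ^ (1 - θ) * (1 + 1 / (θ - 1))) * |u|) := by
        rw [← ENNReal.ofReal_add (by positivity)
          (mul_nonneg (div_nonneg (by positivity) (by linarith)) (abs_nonneg u))]
        congr 1
        field_simp

lemma assemble (a θ C₀ ρ : ℝ) (ha0 : 0 < a)
    (μ : Measure ℝ) [IsFiniteMeasure μ]
    (hsmall : μ (Set.Ioo 0 a) = 0)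
    (htail : ∀ t : ℝ, a ≤ t → μ (Set.Ici t) ≤ ENNReal.ofReal (C₀ * t ^ (-θ)))
    (hρ0 : 0 < ρ) (K : ℝ) (hK : 0 ≤ K)
    (H : ∀ u : ℝ, 0 < |u| → |u| ≤ 1 →
      ∫⁻ t in Set.Ioc (0 : ℝ) 1, ENNReal.ofReal (C₀ * (max a (t / |u|)) ^ (-θ)) ≤
        ENNReal.ofReal (K * |u| ^ ρ)) :
    ∃ C > (0 : ℝ), ∀ u : ℝ,
      ∫⁻ x in Set.Ioi (0 : ℝ), ENNReal.ofReal |tauTrunc (u * x)| ∂μ ≤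
        ENNReal.ofReal (C * ((if |u| ≤ 1 then |u| ^ ρ else 0) +
          (if 1 < |u| then 1 else 0))) := by
  set C : ℝ := max ((μ Set.univ).toReal) K + 1 with hCdef
  have hmax0 : (0:ℝ) ≤ max ((μ Set.univ).toReal) K :=
    le_trans ENNReal.toReal_nonneg (le_max_left _ _)
  refine ⟨C, by rw [hCdef]; linarith, fun u => ?_⟩
  by_cases h1 : |u| ≤ 1
  · rw [if_pos h1, if_neg (not_lt.mpr h1), add_zero]
    by_cases hu : u = 0
    · subst hu
      have : ∀ x : ℝ, ENNReal.ofReal |tauTrunc ((0:ℝ) * x)| = 0 := by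
        intro x
        simp [tauTrunc]
      simp only [this, lintegral_zero]
      exact zero_le
    · have hu0 : 0 < |u| := abs_pos.mpr hu
      refine le_trans (key_reduction a θ C₀ ha0 μ hsmall htail u hu0) ?_
      refine le_trans (H u hu0 h1) (ENNReal.ofReal_le_ofReal ?_)
      refine mul_le_mul_of_nonneg_right ?_ (Real.rpow_nonneg (abs_nonneg u) ρ)
      rw [hCdef]
      have : K ≤ max ((μ Set.univ).toReal) K := le_max_right _ _
      linarith
  · rw [if_neg h1, if_pos (not_le.mp h1), zero_add, mul_one]
    calc ∫⁻ x in Set.Ioi (0 : ℝ), ENNReal.ofReal |tauTrunc (u * x)| ∂μ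
        ≤ ∫⁻ _ in Set.Ioi (0 : ℝ), 1 ∂μ :=
          setLIntegral_mono' measurableSet_Ioi
            (fun x _ => ENNReal.ofReal_le_one.mpr (tauTrunc_abs_le_one _))
      _ = μ (Set.Ioi 0) := setLIntegral_one _
      _ ≤ μ Set.univ := measure_mono (subset_univ _)
      _ = ENNReal.ofReal ((μ Set.univ).toReal) :=
          (ENNReal.ofReal_toReal (measure_ne_top μ _)).symm
      _ ≤ ENNReal.ofReal C := by
          refine ENNReal.ofReal_le_ofReal ?_
          rw [hCdef]
          have : (μ Set.univ).toReal ≤ max ((μ Set.univ).toReal) K := le_max_left _ _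
          linarith

theorem stmt_6
    (a θ C₀ : ℝ) (ha0 : 0 < a) (ha1 : a ≤ 1) (hθ0 : 0 < θ) (hθ2 : θ ≤ 2) (hC₀ : 0 < C₀)
    (μ : Measure ℝ) [IsFiniteMeasure μ]
    (hsupp : μ (Set.Iic 0) = 0) (hsmall : μ (Set.Ioo 0 a) = 0)
    (htail : ∀ t : ℝ, a ≤ t → μ (Set.Ici t) ≤ ENNReal.ofReal (C₀ * t ^ (-θ)))
    (ρ : ℝ) (hρ0 : 0 < ρ) (hρ1 : ρ ≤ 1) (hρθ : ρ ≤ θ) (hρθ1 : θ = 1 → ρ < 1) :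
    ∃ C > (0 : ℝ), ∀ u : ℝ,
      ∫⁻ x in Set.Ioi (0 : ℝ), ENNReal.ofReal |tauTrunc (u * x)| ∂μ ≤
        ENNReal.ofReal (C * ((if |u| ≤ 1 then |u| ^ ρ else 0) +
          (if 1 < |u| then 1 else 0))) := by
  rcases lt_or_eq_of_le hρ1 with hρlt | hρeq
  · refine assemble a θ C₀ ρ ha0 μ hsmall htail hρ0
      (C₀ * a ^ (ρ - θ) / (1 - ρ)) (div_nonneg (by positivity) (by linarith)) ?_
    intro u hu0 hu1
    exact boundA a θ C₀ ρ ha0 hθ0 hC₀ hρ0 hρlt hρθ u hu0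
  · have hθne : θ ≠ 1 := fun h => absurd (hρθ1 h) (by rw [hρeq]; exact lt_irrefl 1)
    have hθgt : 1 < θ := lt_of_le_of_ne (hρeq ▸ hρθ) (Ne.symm hθne)
    refine assemble a θ C₀ ρ ha0 μ hsmall htail hρ0
      (C₀ * a ^ (1 - θ) * (1 + 1 / (θ - 1))) ?_ ?_
    · have h1 : (0:ℝ) ≤ 1 / (θ - 1) := div_nonneg zero_le_one (by linarith)
      exact mul_nonneg (by positivity) (by linarith)
    · subst hρeq
      intro u hu0 hu1
      rw [Real.rpow_one]
      exact boundB a θ C₀ ha0 ha1 hθgt hC₀ u hu0 hu1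

end
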